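/- Let G be a finite simple graph and let x be a half-integral optimal solution to LPVC(G). Then N(V^x_0) = V^x_1: every neighbour of a vertex in V^x_0 lies in V^x_1, and every vertex of V^x_1 has a neighbour in V^x_0. -/

import Mathlib

open scoped Classical

/-- A fractional vertex cover of `G`. -/
def IsFVC {V : Type} (G : SimpleGraph V) (x : V → ℝ) : Prop :=
  (∀ v, 0 ≤ x v ∧ x v ≤ 1) ∧ ∀ ⦃u v⦄, G.Adj u v → 1 ≤ x u + x v

/-- The weight of a fractional vertex cover. -/
noncomputable def fvcWeight {V : Type} [Fintype V] (x : V → ℝ) : ℝ := ∑ v, x v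

/-- `LP(G)`: the minimum weight of a fractional vertex cover of `G`. -/
noncomputable def LPopt {V : Type} [Fintype V] (G : SimpleGraph V) : ℝ :=
  sInf {w : ℝ | ∃ x : V → ℝ, IsFVC G x ∧ w = fvcWeight x}

/-- A matching of `G`: a set of pairwise vertex-disjoint edges of `G`. -/
def IsMatchingSet {V : Type} (G : SimpleGraph V) (M : Finset (Sym2 V)) : Prop :=
  (∀ e ∈ M, e ∈ G.edgeSet) ∧ ∀ e ∈ M, ∀ f ∈ M, e ≠ f → ∀ v : V, v ∈ e → v ∉ f

/-- `MM(G)`: the maximum size of a matching of `G`. -/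
noncomputable def MMnum {V : Type} (G : SimpleGraph V) : ℕ :=
  sSup {n : ℕ | ∃ M : Finset (Sym2 V), IsMatchingSet G M ∧ M.card = n}

/-- `OPT(G)`: the minimum size of a vertex cover of `G`. -/
noncomputable def VCnum {V : Type} (G : SimpleGraph V) : ℕ :=
  sInf {n : ℕ | ∃ S : Finset V, (∀ ⦃u v⦄, G.Adj u v → u ∈ S ∨ v ∈ S) ∧ S.card = n}

/-- `N(X)`: the set of vertices outside `X` having a neighbour in `X`. -/
def nbhd {V : Type} (G : SimpleGraph V) (X : Set V) : Set V :=
  {v | v ∉ X ∧ ∃ u ∈ X, G.Adj u v}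

/-- `X` is an independent set in `G`. -/
def IndepSet {V : Type} (G : SimpleGraph V) (X : Set V) : Prop :=
  ∀ u ∈ X, ∀ v ∈ X, ¬ G.Adj u v

/-- `surplus(G) ≥ s`: every nonempty independent set `X` satisfies `|N(X)| ≥ |X| + s`. -/
def SurplusGE {V : Type} (G : SimpleGraph V) (s : ℕ) : Prop :=
  ∀ X : Set V, X.Nonempty → IndepSet G X → X.ncard + s ≤ (nbhd G X).ncard

/-- The matching `M` saturates the vertex `v`. -/
def Saturates {V : Type} (M : Finset (Sym2 V)) (v : V) : Prop := ∃ e ∈ M, v ∈ e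

/-- `O(G)`: vertices left unsaturated by some maximum matching of `G`. -/
def OSet {V : Type} (G : SimpleGraph V) : Set V :=
  {v | ∃ M : Finset (Sym2 V), IsMatchingSet G M ∧ M.card = MMnum G ∧ ¬ Saturates M v}

/-- `I(G)`: vertices outside `O(G)` having a neighbour in `O(G)`. -/
def ISet {V : Type} (G : SimpleGraph V) : Set V := nbhd G (OSet G)

/-- `P(G)`: the remaining vertices. -/
def GEPSet {V : Type} (G : SimpleGraph V) : Set V := (OSet G ∪ ISet G)ᶜ

/-- For a half-integral optimal LP solution `x`, `N(V^x_0) = V^x_1`. -/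
theorem nbhd_zeros_eq_ones {V : Type} [Fintype V] (G : SimpleGraph V)
    (x : V → ℝ) (hx : IsFVC G x)
    (hhalf : ∀ v, x v = 0 ∨ x v = 1 / 2 ∨ x v = 1)
    (hopt : fvcWeight x = LPopt G) :
    nbhd G {v | x v = 0} = {v | x v = 1} := by
  ext v
  simp only [nbhd, Set.mem_setOf_eq]
  constructor
  · rintro ⟨hv, u, hu, hadj⟩
    have h := hx.2 hadj
    have h2 := (hx.1 v).2
    rw [hu] at h
    linarith
  · intro hv1
    refine ⟨by rw [hv1]; norm_num, ?_⟩
    by_contra hno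
    push_neg at hno
    set x' : V → ℝ := fun u => if u = v then 1/2 else x u with hx'def
    have hfvc : IsFVC G x' := by
      constructor
      · intro u
        simp only [hx'def]
        split
        · norm_num
        · exact (hx.1 u)
      · intro u w hadj
        simp only [hx'def]
        by_cases hu : u = v <;> by_cases hw : w = v
        · subst hu; subst hw; exact absurd hadj (G.loopless.irrefl _)
        · simp only [hu, if_pos rfl, if_neg hw]
          have hne : x w ≠ 0 := fun h0 => hno w h0 (G.adj_symm (hu ▸ hadj))
          rcases hhalf w with h | h | h
          · exact absurd h hne
          · rw [h]; norm_num
          · rw [h]; norm_num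
        · simp only [hw, if_neg hu, if_pos rfl]
          have hne : x u ≠ 0 := fun h0 => hno u h0 (hw ▸ hadj)
          rcases hhalf u with h | h | h
          · exact absurd h hne
          · rw [h]; norm_num
          · rw [h]; norm_num
        · simp only [if_neg hu, if_neg hw]
          exact hx.2 hadj
    have hw : fvcWeight x' = fvcWeight x - 1/2 := by
      have : fvcWeight x' - fvcWeight x = ∑ u, (x' u - x u) := by
        rw [Finset.sum_sub_distrib]; rfl
      have h2 : ∑ u, (x' u - x u) = x' v - x v := by
        apply Finset.sum_eq_single_of_mem v (Finset.mem_univ v)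
        intro u _ hu
        simp [hx'def, hu]
      have h3 : x' v = 1/2 := by simp [hx'def]
      rw [h2, h3, hv1] at this
      linarith
    have hbdd : BddBelow {w : ℝ | ∃ y : V → ℝ, IsFVC G y ∧ w = fvcWeight y} := by
      refine ⟨0, ?_⟩
      rintro w ⟨y, hy, rfl⟩
      exact Finset.sum_nonneg fun u _ => (hy.1 u).1
    have hle : LPopt G ≤ fvcWeight x' := csInf_le hbdd ⟨x', hfvc, rfl⟩
    rw [hw] at hle
    linarith [hopt ▸ hle]
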